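/- Let ρ : M → L' be an injective homomorphism of nondegenerate integral lattices. Suppose that for every prime ℓ dividing disc(M), there is a sublattice L(ℓ) of L' containing ρ(M) such that the composition M⊗𝔽_ℓ → L(ℓ)⊗𝔽_ℓ → (L(ℓ)⊗𝔽_ℓ)* (reduction of ρ followed by the map induced by the pairing) is injective. Then ρ(M) is primitively contained in L', i.e., L'/ρ(M) is torsion-free. -/

import Mathlib

/-- Let `ρ : M → L'` be an injective homomorphism of nondegenerate integral
lattices. Suppose for every prime `ℓ` dividing `disc M` there is a sublattice
`L(ℓ)` of `L'` containing `ρ(M)` such that the induced map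
`M ⊗ 𝔽_ℓ → (L(ℓ) ⊗ 𝔽_ℓ)*` is injective (expressed elementwise: any `x ∈ M`
pairing to `0 mod ℓ` with every element of `L(ℓ)` is divisible by `ℓ` in `M`).
Then `ρ(M)` is primitively contained in `L'`, i.e. `L'/ρ(M)` is torsion-free. -/
theorem stmt_9 {M L' : Type*} [AddCommGroup M] [Module ℤ M]
    [Module.Free ℤ M] [Module.Finite ℤ M]
    [AddCommGroup L'] [Module ℤ L'] [Module.Free ℤ L'] [Module.Finite ℤ L']
    (BM : M →ₗ[ℤ] M →ₗ[ℤ] ℤ) (BL : L' →ₗ[ℤ] L' →ₗ[ℤ] ℤ)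
    (hMsymm : ∀ x y, BM x y = BM y x) (hLsymm : ∀ x y, BL x y = BL y x)
    (hMnd : Function.Injective BM) (hLnd : Function.Injective BL)
    (ρ : M →ₗ[ℤ] L') (hρ : Function.Injective ρ)
    (hcompat : ∀ x y, BL (ρ x) (ρ y) = BM x y)
    {ι : Type*} [Fintype ι] [DecidableEq ι] (bM : Module.Basis ι ℤ M)
    (hL : ∀ ℓ : ℕ, ℓ.Prime →
      (ℓ : ℤ) ∣ (Matrix.of fun i j => BM (bM i) (bM j)).det →
      ∃ L : Submodule ℤ L', LinearMap.range ρ ≤ L ∧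
        ∀ x : M, (∀ y ∈ L, (ℓ : ℤ) ∣ BL (ρ x) y) →
          ∃ x' : M, x = (ℓ : ℤ) • x') :
    ∀ (y : L') (n : ℤ), n ≠ 0 → n • y ∈ LinearMap.range ρ →
      y ∈ LinearMap.range ρ := by
  simp only [← Int.cast_smul_eq_zsmul ℤ, Int.cast_id] at hL
  have key : ∀ ℓ : ℕ, ℓ.Prime → ∀ y : L', (ℓ : ℤ) • y ∈ LinearMap.range ρ →
      y ∈ LinearMap.range ρ := by
    intro ℓ hℓ y hy
    simp only [← Int.cast_smul_eq_zsmul ℤ, Int.cast_id] at hy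
    obtain ⟨x, hx⟩ := hy
    have hdiv : ∃ x' : M, x = (ℓ : ℤ) • x' := by
      simp only [← Int.cast_smul_eq_zsmul ℤ, Int.cast_id]
      by_cases hd : (ℓ : ℤ) ∣ (Matrix.of fun i j => BM (bM i) (bM j)).det
      · obtain ⟨L, hsub, hinj⟩ := hL ℓ hℓ hd
        refine hinj x ?_
        intro y' _
        refine ⟨BL y y', ?_⟩
        rw [hx, LinearMap.map_smul]
        simp
      · haveI : Fact ℓ.Prime := ⟨hℓ⟩
        set G : Matrix ι ι ℤ := Matrix.of fun i j => BM (bM i) (bM j) with hG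
        have hrowdvd : ∀ j, (ℓ : ℤ) ∣ BM x (bM j) := by
          intro j
          refine ⟨BL y (ρ (bM j)), ?_⟩
          rw [← hcompat, hx, LinearMap.map_smul]
          simp
        have hexp : ∀ j, BM x (bM j) = ∑ i, bM.repr x i * G i j := by
          intro j
          conv_lhs => rw [← bM.sum_equivFun x]
          simp [map_sum, Module.Basis.equivFun_apply, hG, smul_eq_mul, Finset.sum_apply, -Module.Basis.sum_repr]
        set Gb : Matrix ι ι (ZMod ℓ) := G.map (Int.cast) with hGb
        have hGdet : ((G.det : ℤ) : ZMod ℓ) ≠ 0 := fun h =>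
          hd ((ZMod.intCast_zmod_eq_zero_iff_dvd _ _).mp h)
        have hGbd : Gb.det = ((G.det : ℤ) : ZMod ℓ) := by
          have := RingHom.map_det (Int.castRingHom (ZMod ℓ)) G
          simpa [hGb] using this.symm
        have hGbdet : IsUnit Gb.det := by
          rw [hGbd]
          exact isUnit_iff_ne_zero.mpr hGdet
        set c : ι → ZMod ℓ := fun i => ((bM.repr x i : ℤ) : ZMod ℓ) with hc'
        have hvm : Matrix.vecMul c Gb = 0 := by
          funext j
          have h0 : ((BM x (bM j) : ℤ) : ZMod ℓ) = 0 :=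
            (ZMod.intCast_zmod_eq_zero_iff_dvd _ _).mpr (hrowdvd j)
          rw [hexp j] at h0
          push_cast at h0
          simpa [Matrix.vecMul, dotProduct, hGb, Matrix.map_apply, hc'] using h0
        have hc : c = 0 := by
          have h1 : c = Matrix.vecMul (Matrix.vecMul c Gb) Gb⁻¹ := by
            rw [Matrix.vecMul_vecMul, Matrix.mul_nonsing_inv _ hGbdet, Matrix.vecMul_one]
          rw [h1, hvm, Matrix.zero_vecMul]
        have hdvdc : ∀ i, (ℓ : ℤ) ∣ bM.repr x i := fun i =>
          (ZMod.intCast_zmod_eq_zero_iff_dvd _ _).mp (congrFun hc i)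
        choose d hdd using hdvdc
        refine ⟨bM.equivFun.symm d, ?_⟩
        apply bM.equivFun.injective
        rw [LinearEquiv.map_smul, LinearEquiv.apply_symm_apply]
        funext i
        simp [Module.Basis.equivFun_apply, hdd i, smul_eq_mul]
    obtain ⟨x', rfl⟩ := hdiv
    refine ⟨x', ?_⟩
    simp only [← Int.cast_smul_eq_zsmul ℤ, Int.cast_id] at hx
    rw [LinearMap.map_smul] at hx
    have hℓ0 : (ℓ : ℤ) ≠ 0 := by exact_mod_cast hℓ.ne_zero
    exact smul_right_injective L' hℓ0 hx
  intro y n hn hny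
  have h1 : ((n.natAbs : ℤ)) • y ∈ LinearMap.range ρ := by
    rcases Int.natAbs_eq n with h | h
    · rwa [← h]
    · have hh : ((n.natAbs : ℤ)) • y = -(n • y) := by
        rw [← neg_zsmul]; congr 1; omega
      rw [hh]
      exact Submodule.neg_mem _ hny
  have hk : 0 < n.natAbs := Int.natAbs_pos.mpr hn
  have main : ∀ k : ℕ, 0 < k → ∀ z : L', (k : ℤ) • z ∈ LinearMap.range ρ →
      z ∈ LinearMap.range ρ := by
    intro k
    induction k using Nat.strong_induction_on with
    | _ k ih =>
      intro hkpos z hz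
      rcases eq_or_ne k 1 with rfl | hk1
      · rwa [Nat.cast_one, one_zsmul] at hz
      · have hp := Nat.minFac_prime hk1
        obtain ⟨m, hm⟩ := Nat.minFac_dvd k
        have hm0 : 0 < m := by
          rcases Nat.eq_zero_or_pos m with rfl | h
          · simp only [mul_zero] at hm; omega
          · exact h
        have hks : ((k : ℤ)) • z = (k.minFac : ℤ) • ((m : ℤ) • z) := by
          rw [← mul_zsmul, ← Nat.cast_mul, ← hm]
        have hmy := key _ hp _ (hks ▸ hz)
        have hmlt : m < k := by
          have h2 : 1 * m < k.minFac * m := (Nat.mul_lt_mul_right hm0).mpr hp.one_lt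
          omega
        exact ih m hmlt hm0 z hmy
  exact main _ hk _ h1
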